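/- arXiv:2310.05348 — 2 statements merged into one kernel-verified Lean document; each statement's English description precedes it below -/
import Mathlib

section
/- The min-max invariance penalty min_h max_g E[(h(Z)-T)^2 - (g(Z,Y)-T)^2] equals E[Var(T|Z)] - E[Var(T|Z,Y)] when both optima are attained, and this value is zero if and only if E[T|Z] = E[T|Z,Y] almost surely. -/
open MeasureTheory ProbabilityTheory

lemma my_integrable_mul {Ω : Type*} {M : MeasurableSpace Ω} {μ : Measure Ω} {f g : Ω → ℝ}
    (hf : MemLp f 2 μ) (hg : MemLp g 2 μ) : Integrable (fun ω => f ω * g ω) μ := by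
  refine Integrable.mono' (hf.integrable_sq.add hg.integrable_sq)
    (hf.aestronglyMeasurable.mul hg.aestronglyMeasurable) (Filter.Eventually.of_forall fun x => ?_)
  have h1 := sq_nonneg (|f x| - |g x|)
  have h2 : |f x| ^ 2 = f x ^ 2 := sq_abs _
  have h3 : |g x| ^ 2 = g x ^ 2 := sq_abs _
  simp only [Pi.add_apply]
  rw [Real.norm_eq_abs, abs_mul]
  nlinarith [abs_nonneg (f x), abs_nonneg (g x)]

lemma my_memℒp_condexp {Ω : Type*} {m M : MeasurableSpace Ω} {μ : Measure Ω} [IsProbabilityMeasure μ]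
    (hm : m ≤ M) {T : Ω → ℝ} (hT : MemLp T 2 μ) :
    MemLp (μ[T|m]) 2 μ := by
  have h2 : (2 : ENNReal) ≠ ⊤ := by norm_num
  set c' := condExpL2 ℝ ℝ hm (hT.toLp T) with hc'
  have hmem : MemLp ((c' : Lp ℝ 2 μ) : Ω → ℝ) 2 μ := Lp.memLp _
  have heq : μ[T|m] =ᵐ[μ] ((c' : Lp ℝ 2 μ) : Ω → ℝ) := by
    refine (ae_eq_condExp_of_forall_setIntegral_eq hm (hT.integrable one_le_two)
      (fun s _ _ => integrableOn_condExpL2_of_measure_ne_top hm (measure_ne_top μ s) _)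
      (fun s hs _ => ?_) (aestronglyMeasurable_condExpL2 hm _)).symm
    rw [integral_condExpL2_eq hm (hT.toLp T) hs (measure_ne_top μ s)]
    exact setIntegral_congr_ae (hm s hs) ((hT.coeFn_toLp).mono fun x hx _ => hx)
  exact hmem.ae_eq heq.symm

lemma my_pythagoras {Ω : Type*} {m M : MeasurableSpace Ω} {μ : Measure Ω} [IsProbabilityMeasure μ]
    (hm : m ≤ M) {T f : Ω → ℝ} (hT : MemLp T 2 μ) (hf : MemLp f 2 μ)
    (hfm : StronglyMeasurable[m] f) :
    ∫ ω, (f ω - T ω) ^ 2 ∂μ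
      = (∫ ω, (f ω - (μ[T|m]) ω) ^ 2 ∂μ) + ∫ ω, (T ω - (μ[T|m]) ω) ^ 2 ∂μ := by
  set c := μ[T|m] with hc
  have hc2 : MemLp c 2 μ := my_memℒp_condexp hm hT
  have hu2 : MemLp (fun ω => f ω - c ω) 2 μ := hf.sub hc2
  have hv2 : MemLp (fun ω => T ω - c ω) 2 μ := hT.sub hc2
  have hum : StronglyMeasurable[m] (fun ω => f ω - c ω) :=
    hfm.sub stronglyMeasurable_condExp
  have hintuT : Integrable (fun ω => (f ω - c ω) * T ω) μ := my_integrable_mul hu2 hT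
  have hintuc : Integrable (fun ω => (f ω - c ω) * c ω) μ := my_integrable_mul hu2 hc2
  have hcross : ∫ ω, (f ω - c ω) * (T ω - c ω) ∂μ = 0 := by
    have hmul : μ[(fun ω => f ω - c ω) * T|m] =ᵐ[μ] (fun ω => f ω - c ω) * μ[T|m] :=
      condExp_mul_of_stronglyMeasurable_left hum hintuT (hT.integrable one_le_two)
    have h1 : ∫ ω, (μ[(fun ω => f ω - c ω) * T|m]) ω ∂μ = ∫ ω, (f ω - c ω) * T ω ∂μ := by
      have := integral_condExp (μ := μ) (f := (fun ω => f ω - c ω) * T) hm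
      simpa [Pi.mul_apply] using this
    have h2 : ∫ ω, (μ[(fun ω => f ω - c ω) * T|m]) ω ∂μ = ∫ ω, (f ω - c ω) * c ω ∂μ :=
      integral_congr_ae hmul
    have h3 : ∫ ω, (f ω - c ω) * (T ω - c ω) ∂μ
        = (∫ ω, (f ω - c ω) * T ω ∂μ) - ∫ ω, (f ω - c ω) * c ω ∂μ := by
      rw [← integral_sub hintuT hintuc]
      congr 1; funext ω; ring
    rw [h3, ← h1, h2, sub_self]
  have hexp : ∀ ω, (f ω - T ω) ^ 2
      = (f ω - c ω) ^ 2 - 2 * ((f ω - c ω) * (T ω - c ω)) + (T ω - c ω) ^ 2 := by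
    intro ω; ring
  calc ∫ ω, (f ω - T ω) ^ 2 ∂μ
      = ∫ ω, ((f ω - c ω) ^ 2 - 2 * ((f ω - c ω) * (T ω - c ω)) + (T ω - c ω) ^ 2) ∂μ := by
        exact integral_congr_ae (Filter.Eventually.of_forall hexp)
    _ = (∫ ω, ((f ω - c ω) ^ 2 - 2 * ((f ω - c ω) * (T ω - c ω))) ∂μ)
        + ∫ ω, (T ω - c ω) ^ 2 ∂μ := by
        exact integral_add (hu2.integrable_sq.sub ((my_integrable_mul hu2 hv2).const_mul 2))
          hv2.integrable_sq
    _ = (∫ ω, (f ω - c ω) ^ 2 ∂μ) - 2 * (∫ ω, (f ω - c ω) * (T ω - c ω) ∂μ)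
        + ∫ ω, (T ω - c ω) ^ 2 ∂μ := by
        rw [integral_sub hu2.integrable_sq ((my_integrable_mul hu2 hv2).const_mul 2),
          integral_const_mul]
    _ = (∫ ω, (f ω - c ω) ^ 2 ∂μ) + ∫ ω, (T ω - c ω) ^ 2 ∂μ := by rw [hcross]; ring

/-- The min-max invariance penalty `min_h max_g E[(h(Z)-T)^2 - (g(Z,Y)-T)^2]`, over classes
`H` (containing the Bayes regressor `z ↦ E[T|Z=z]`) and `G` (containing
`(z,y) ↦ E[T|Z=z,Y=y]`) of measurable square-integrable predictors, equals
`E[Var(T|Z)] - E[Var(T|Z,Y)]` (with `E[Var(T|·)] = E[(T - E[T|·])^2]`), and this value is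
zero if and only if `E[T|Z] = E[T|Z,Y]` almost surely. -/
theorem cil_minmax_penalty
    {Ω γ δ : Type*} [MeasurableSpace Ω] [MeasurableSpace γ] [MeasurableSpace δ]
    (μ : Measure Ω) [IsProbabilityMeasure μ]
    (Z : Ω → γ) (hZ : Measurable Z) (Y : Ω → δ) (hY : Measurable Y)
    (T : Ω → ℝ) (hT : MemLp T 2 μ)
    (H : Set (γ → ℝ)) (G : Set (γ × δ → ℝ))
    (hHmeas : ∀ h ∈ H, Measurable h ∧ MemLp (fun ω => h (Z ω)) 2 μ)
    (hGmeas : ∀ g ∈ G, Measurable g ∧ MemLp (fun ω => g (Z ω, Y ω)) 2 μ)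
    (hHstar : ∃ h ∈ H, (fun ω => h (Z ω)) =ᵐ[μ] μ[T | MeasurableSpace.comap Z inferInstance])
    (hGstar : ∃ g ∈ G, (fun ω => g (Z ω, Y ω))
      =ᵐ[μ] μ[T | MeasurableSpace.comap (fun ω => (Z ω, Y ω)) inferInstance]) :
    (⨅ h : H, ⨆ g : G,
        (∫ ω, ((h : γ → ℝ) (Z ω) - T ω) ^ 2 ∂μ
          - ∫ ω, ((g : γ × δ → ℝ) (Z ω, Y ω) - T ω) ^ 2 ∂μ)
      = (∫ ω, (T ω - (μ[T | MeasurableSpace.comap Z inferInstance]) ω) ^ 2 ∂μ)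
        - ∫ ω, (T ω - (μ[T | MeasurableSpace.comap (fun ω => (Z ω, Y ω)) inferInstance]) ω) ^ 2 ∂μ)
    ∧ ((⨅ h : H, ⨆ g : G,
        (∫ ω, ((h : γ → ℝ) (Z ω) - T ω) ^ 2 ∂μ
          - ∫ ω, ((g : γ × δ → ℝ) (Z ω, Y ω) - T ω) ^ 2 ∂μ)) = 0
      ↔ (μ[T | MeasurableSpace.comap Z inferInstance]
          =ᵐ[μ] μ[T | MeasurableSpace.comap (fun ω => (Z ω, Y ω)) inferInstance])) := by
  classical
  obtain ⟨h₀, hh₀H, hh₀⟩ := hHstar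
  obtain ⟨g₀, hg₀G, hg₀⟩ := hGstar
  haveI : Nonempty ↥H := ⟨⟨h₀, hh₀H⟩⟩
  haveI : Nonempty ↥G := ⟨⟨g₀, hg₀G⟩⟩
  have hmZ : MeasurableSpace.comap Z inferInstance ≤ (inferInstance : MeasurableSpace Ω) :=
    measurable_iff_comap_le.mp hZ
  have hmZY : MeasurableSpace.comap (fun ω => (Z ω, Y ω)) inferInstance
      ≤ (inferInstance : MeasurableSpace Ω) := measurable_iff_comap_le.mp (hZ.prodMk hY)
  have hle : MeasurableSpace.comap Z inferInstance
      ≤ MeasurableSpace.comap (fun ω => (Z ω, Y ω)) inferInstance := by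
    have h1 : (MeasurableSpace.comap Prod.fst (inferInstance : MeasurableSpace γ)).comap
        (fun ω => (Z ω, Y ω)) = MeasurableSpace.comap Z inferInstance := by
      rw [MeasurableSpace.comap_comp]; rfl
    rw [← h1]
    exact MeasurableSpace.comap_mono (measurable_iff_comap_le.mp measurable_fst)
  have sqswap : ∀ a b : ℝ, (a - b) ^ 2 = (b - a) ^ 2 := fun a b => by ring
  set cZ : Ω → ℝ := μ[T | MeasurableSpace.comap Z inferInstance] with hcZ
  set cZY : Ω → ℝ := μ[T | MeasurableSpace.comap (fun ω => (Z ω, Y ω)) inferInstance] with hcZY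
  set D : ℝ := ∫ ω, (T ω - cZ ω) ^ 2 ∂μ with hD
  set C : ℝ := ∫ ω, (T ω - cZY ω) ^ 2 ∂μ with hC
  have hAge : ∀ h : ↥H, D ≤ ∫ ω, ((h : γ → ℝ) (Z ω) - T ω) ^ 2 ∂μ := by
    rintro ⟨h, hh⟩
    have hsm : StronglyMeasurable[MeasurableSpace.comap Z inferInstance]
        (fun ω => h (Z ω)) :=
      ((hHmeas h hh).1.comp (measurable_iff_comap_le.mpr le_rfl)).stronglyMeasurable
    have hp := my_pythagoras hmZ hT (hHmeas h hh).2 hsm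
    have hnn : (0:ℝ) ≤ ∫ ω, ((fun ω => h (Z ω)) ω - cZ ω) ^ 2 ∂μ :=
      integral_nonneg fun ω => sq_nonneg _
    show D ≤ ∫ ω, (h (Z ω) - T ω) ^ 2 ∂μ
    rw [hD]
    calc ∫ ω, (T ω - cZ ω) ^ 2 ∂μ
        ≤ (∫ ω, ((fun ω => h (Z ω)) ω - cZ ω) ^ 2 ∂μ) + ∫ ω, (T ω - cZ ω) ^ 2 ∂μ := by
          linarith
      _ = ∫ ω, (h (Z ω) - T ω) ^ 2 ∂μ := hp.symm
  have hBge : ∀ g : ↥G, C ≤ ∫ ω, ((g : γ × δ → ℝ) (Z ω, Y ω) - T ω) ^ 2 ∂μ := by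
    rintro ⟨g, hg⟩
    have hsm : StronglyMeasurable[MeasurableSpace.comap (fun ω => (Z ω, Y ω)) inferInstance]
        (fun ω => g (Z ω, Y ω)) :=
      ((hGmeas g hg).1.comp (measurable_iff_comap_le.mpr le_rfl)).stronglyMeasurable
    have hp := my_pythagoras hmZY hT (hGmeas g hg).2 hsm
    have hnn : (0:ℝ) ≤ ∫ ω, ((fun ω => g (Z ω, Y ω)) ω - cZY ω) ^ 2 ∂μ :=
      integral_nonneg fun ω => sq_nonneg _
    show C ≤ ∫ ω, (g (Z ω, Y ω) - T ω) ^ 2 ∂μ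
    rw [hC]
    calc ∫ ω, (T ω - cZY ω) ^ 2 ∂μ
        ≤ (∫ ω, ((fun ω => g (Z ω, Y ω)) ω - cZY ω) ^ 2 ∂μ) + ∫ ω, (T ω - cZY ω) ^ 2 ∂μ := by
          linarith
      _ = ∫ ω, (g (Z ω, Y ω) - T ω) ^ 2 ∂μ := hp.symm
  have hAh₀ : ∫ ω, (h₀ (Z ω) - T ω) ^ 2 ∂μ = D := by
    rw [hD]
    refine integral_congr_ae ?_
    filter_upwards [hh₀] with ω hω
    rw [show h₀ (Z ω) = cZ ω from hω]
    exact sqswap _ _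
  have hBg₀ : ∫ ω, (g₀ (Z ω, Y ω) - T ω) ^ 2 ∂μ = C := by
    rw [hC]
    refine integral_congr_ae ?_
    filter_upwards [hg₀] with ω hω
    rw [show g₀ (Z ω, Y ω) = cZY ω from hω]
    exact sqswap _ _
  have hsup : ∀ h : ↥H,
      (⨆ g : ↥G, (∫ ω, ((h : γ → ℝ) (Z ω) - T ω) ^ 2 ∂μ
          - ∫ ω, ((g : γ × δ → ℝ) (Z ω, Y ω) - T ω) ^ 2 ∂μ))
        = (∫ ω, ((h : γ → ℝ) (Z ω) - T ω) ^ 2 ∂μ) - C := by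
    intro h
    apply le_antisymm
    · exact ciSup_le fun g => sub_le_sub_left (hBge g) _
    · have hb : BddAbove (Set.range fun g : ↥G =>
          (∫ ω, ((h : γ → ℝ) (Z ω) - T ω) ^ 2 ∂μ
            - ∫ ω, ((g : γ × δ → ℝ) (Z ω, Y ω) - T ω) ^ 2 ∂μ)) := by
        refine ⟨(∫ ω, ((h : γ → ℝ) (Z ω) - T ω) ^ 2 ∂μ) - C, ?_⟩
        rintro x ⟨g, rfl⟩
        exact sub_le_sub_left (hBge g) _
      have hles := le_ciSup hb (⟨g₀, hg₀G⟩ : ↥G)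
      calc (∫ ω, ((h : γ → ℝ) (Z ω) - T ω) ^ 2 ∂μ) - C
          = (∫ ω, ((h : γ → ℝ) (Z ω) - T ω) ^ 2 ∂μ)
            - ∫ ω, (((⟨g₀, hg₀G⟩ : ↥G) : γ × δ → ℝ) (Z ω, Y ω) - T ω) ^ 2 ∂μ := by
            rw [show ∫ ω, (((⟨g₀, hg₀G⟩ : ↥G) : γ × δ → ℝ) (Z ω, Y ω) - T ω) ^ 2 ∂μ = C
              from hBg₀]
        _ ≤ _ := hles
  have hval : (⨅ h : ↥H, ⨆ g : ↥G,
      (∫ ω, ((h : γ → ℝ) (Z ω) - T ω) ^ 2 ∂μ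
        - ∫ ω, ((g : γ × δ → ℝ) (Z ω, Y ω) - T ω) ^ 2 ∂μ)) = D - C := by
    rw [iInf_congr hsup]
    apply le_antisymm
    · have hb : BddBelow (Set.range fun h : ↥H =>
          (∫ ω, ((h : γ → ℝ) (Z ω) - T ω) ^ 2 ∂μ) - C) := by
        refine ⟨D - C, ?_⟩
        rintro x ⟨h, rfl⟩
        exact sub_le_sub_right (hAge h) _
      have hles := ciInf_le hb (⟨h₀, hh₀H⟩ : ↥H)
      calc (⨅ h : ↥H, (∫ ω, ((h : γ → ℝ) (Z ω) - T ω) ^ 2 ∂μ) - C)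
          ≤ (∫ ω, (((⟨h₀, hh₀H⟩ : ↥H) : γ → ℝ) (Z ω) - T ω) ^ 2 ∂μ) - C := hles
        _ = D - C := by
            rw [show ∫ ω, (((⟨h₀, hh₀H⟩ : ↥H) : γ → ℝ) (Z ω) - T ω) ^ 2 ∂μ = D from hAh₀]
    · exact le_ciInf fun h => sub_le_sub_right (hAge h) _
  have hcZ2 : MemLp cZ 2 μ := my_memℒp_condexp hmZ hT
  have hcZY2 : MemLp cZY 2 μ := my_memℒp_condexp hmZY hT
  have hDC : D - C = ∫ ω, (cZ ω - cZY ω) ^ 2 ∂μ := by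
    have hp := my_pythagoras hmZY hT hcZ2 (stronglyMeasurable_condExp.mono hle)
    have h1 : ∫ ω, (cZ ω - T ω) ^ 2 ∂μ = D := by
      rw [hD]
      exact integral_congr_ae (Filter.Eventually.of_forall fun ω => sqswap _ _)
    rw [hD, hC] at *
    linarith
  refine ⟨hval, ?_⟩
  rw [hval]
  constructor
  · intro hzero
    have hint0 : ∫ ω, (cZ ω - cZY ω) ^ 2 ∂μ = 0 := by rw [← hDC]; exact hzero
    have hint : Integrable (fun ω => (cZ ω - cZY ω) ^ 2) μ := (hcZ2.sub hcZY2).integrable_sq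
    have hae := (integral_eq_zero_iff_of_nonneg_ae
      (Filter.Eventually.of_forall fun ω => sq_nonneg _) hint).mp hint0
    filter_upwards [hae] with ω hω
    have h2 : (cZ ω - cZY ω) ^ 2 = 0 := hω
    have h3 : cZ ω - cZY ω = 0 := by
      exact (pow_eq_zero_iff two_ne_zero).mp h2
    linarith
  · intro hae
    have : D = C := by
      rw [hD, hC]
      refine integral_congr_ae ?_
      filter_upwards [hae] with ω hω
      rw [hω]
    rw [this, sub_self]
end

section
/- Matching conditional means for all labels characterizes the CIL constraint: under the assumption that the hypothesis classes contain the Bayes-optimal regressors h*(z) = E[T|Φ(X)=z] and g*(z,y) = E[T|Φ(X)=z, Y=y], the equality min_h max_g E[(h(Φ(X))-T)² - (g(Φ(X),Y)-T)²] = 0 holds if and only if E[T|Φ(X)] = E[T|Φ(X), Y=y] almost surely for every y in the (finite) label set. -/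
open MeasureTheory ProbabilityTheory

section CILAux

variable {Ω : Type*} {m : MeasurableSpace Ω} {m0 : MeasurableSpace Ω} {μ : Measure Ω}

lemma integrable_mul_of_L2 {f g : Ω → ℝ} (hf : MemLp f 2 μ) (hg : MemLp g 2 μ) :
    Integrable (fun ω => f ω * g ω) μ := by
  have h1 := (hf.add hg).integrable_sq
  have h2 := hf.integrable_sq
  have h3 := hg.integrable_sq
  have h : Integrable (fun ω => (((f ω + g ω) ^ 2 - f ω ^ 2) - g ω ^ 2) / 2) μ := by
    simp only [Pi.add_apply] at h1
    exact ((h1.sub h2).sub h3).div_const 2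
  refine h.congr (Filter.Eventually.of_forall fun ω => ?_)
  ring

variable [IsProbabilityMeasure μ]

lemma memL2_condexp (hm : m ≤ m0) {T : Ω → ℝ} (hT : MemLp T 2 μ) :
    MemLp (μ[T|m]) 2 μ := by
  have hK : (↑(condExpL2 ℝ ℝ hm (hT.toLp T)) : Ω → ℝ) =ᵐ[μ] μ[T|m] := by
    refine ae_eq_condExp_of_forall_setIntegral_eq hm (hT.integrable one_le_two)
      (fun s hs hμs => integrableOn_condExpL2_of_measure_ne_top hm hμs.ne _)
      (fun s hs hμs => ?_) (aestronglyMeasurable_condExpL2 hm _)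
    have e1 : ∫ x in s, (↑(condExpL2 ℝ ℝ hm (hT.toLp T)) : Ω → ℝ) x ∂μ
        = ∫ x in s, (hT.toLp T) x ∂μ :=
      integral_condExpL2_eq_of_fin_meas_real (hT.toLp T) hs hμs.ne
    have e2 : ∫ x in s, (hT.toLp T) x ∂μ = ∫ x in s, T x ∂μ :=
      setIntegral_congr_ae (hm s hs) ((hT.coeFn_toLp).mono fun ω h _ => h)
    exact e1.trans e2
  have h2 : MemLp (↑↑(condExpL2 ℝ ℝ hm (hT.toLp T)) : Ω → ℝ) 2 μ :=
    Lp.memLp (↑(condExpL2 ℝ ℝ hm (hT.toLp T)) : Lp ℝ 2 μ)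
  exact h2.ae_eq hK

lemma integral_mul_condExp_sub (hm : m ≤ m0) {T W : Ω → ℝ} (hT : MemLp T 2 μ)
    (hWm : AEStronglyMeasurable[m] W μ) (hW : MemLp W 2 μ) :
    ∫ ω, W ω * ((μ[T|m]) ω - T ω) ∂μ = 0 := by
  set F := μ[T|m] with hFdef
  have hF2 : MemLp F 2 μ := memL2_condexp hm hT
  have hFT : MemLp (F - T) 2 μ := hF2.sub hT
  have hint : Integrable (W * (F - T)) μ := by
    have := integrable_mul_of_L2 hW hFT
    exact this
  have hpull : μ[W * (F - T)|m] =ᵐ[μ] W * μ[F - T|m] :=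
    condExp_mul_of_aestronglyMeasurable_left hWm hint (hFT.integrable one_le_two)
  have hzero : μ[F - T|m] =ᵐ[μ] 0 := by
    have h1 : μ[F - T|m] =ᵐ[μ] μ[F|m] - μ[T|m] :=
      condExp_sub (hF2.integrable one_le_two) (hT.integrable one_le_two) m
    have h2 : μ[F|m] =ᵐ[μ] F := condExp_condExp_of_le le_rfl hm
    filter_upwards [h1, h2] with ω e1 e2
    simp [e1, e2]
    simp [hFdef]
  have : ∫ ω, (W * (F - T)) ω ∂μ = ∫ ω, (μ[W * (F - T)|m]) ω ∂μ :=
    (integral_condExp hm).symm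
  rw [show (fun ω => W ω * (F ω - T ω)) = W * (F - T) from rfl, this]
  rw [integral_congr_ae hpull]
  have : W * μ[F - T|m] =ᵐ[μ] 0 := by
    filter_upwards [hzero] with ω e
    simp [e]
  rw [integral_congr_ae this]
  simp

lemma pythag (hm : m ≤ m0) {T W : Ω → ℝ} (hT : MemLp T 2 μ)
    (hWm : AEStronglyMeasurable[m] W μ) (hW : MemLp W 2 μ) :
    ∫ ω, (W ω - T ω) ^ 2 ∂μ
      = ∫ ω, (W ω - (μ[T|m]) ω) ^ 2 ∂μ + ∫ ω, ((μ[T|m]) ω - T ω) ^ 2 ∂μ := by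
  set F := μ[T|m] with hFdef
  have hF2 : MemLp F 2 μ := memL2_condexp hm hT
  have hD2 : MemLp (fun ω => W ω - F ω) 2 μ := by
    have := hW.sub hF2; exact this
  have hFm : AEStronglyMeasurable[m] F μ :=
    StronglyMeasurable.aestronglyMeasurable stronglyMeasurable_condExp
  have hDm : AEStronglyMeasurable[m] (fun ω => W ω - F ω) μ := hWm.sub hFm
  have horth : ∫ ω, (W ω - F ω) * (F ω - T ω) ∂μ = 0 :=
    integral_mul_condExp_sub hm hT hDm hD2
  have hi1 : Integrable (fun ω => (W ω - F ω) ^ 2) μ := hD2.integrable_sq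
  have hi3 : Integrable (fun ω => (F ω - T ω) ^ 2) μ := (hF2.sub hT).integrable_sq
  have hi2 : Integrable (fun ω => (W ω - F ω) * (F ω - T ω)) μ :=
    integrable_mul_of_L2 hD2 (hF2.sub hT)
  have key : ∫ ω, (W ω - T ω) ^ 2 ∂μ
      = ∫ ω, ((W ω - F ω) ^ 2 + (2 * ((W ω - F ω) * (F ω - T ω)) + (F ω - T ω) ^ 2)) ∂μ := by
    apply integral_congr_ae
    filter_upwards with ω
    ring
  have hi2' : Integrable (fun ω => 2 * ((W ω - F ω) * (F ω - T ω))) μ := hi2.const_mul 2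
  have hi23 : Integrable (fun ω => 2 * ((W ω - F ω) * (F ω - T ω)) + (F ω - T ω) ^ 2) μ :=
    hi2'.add hi3
  rw [key, integral_add hi1 hi23, integral_add hi2' hi3, integral_const_mul, horth]
  ring

lemma pythag_le (hm : m ≤ m0) {T W : Ω → ℝ} (hT : MemLp T 2 μ)
    (hWm : AEStronglyMeasurable[m] W μ) (hW : MemLp W 2 μ) :
    ∫ ω, ((μ[T|m]) ω - T ω) ^ 2 ∂μ ≤ ∫ ω, (W ω - T ω) ^ 2 ∂μ := by
  rw [pythag hm hT hWm hW]
  have : 0 ≤ ∫ ω, (W ω - (μ[T|m]) ω) ^ 2 ∂μ :=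
    integral_nonneg fun ω => sq_nonneg _
  linarith

end CILAux

lemma minmax_eq_zero_iff {Ω : Type*} {mA mB : MeasurableSpace Ω} {m0 : MeasurableSpace Ω}
    {μ : Measure Ω} [IsProbabilityMeasure μ]
    (hmA : mA ≤ m0) (hmB : mB ≤ m0) (hAB : mA ≤ mB)
    {T : Ω → ℝ} (hT : MemLp T 2 μ)
    {ι κ : Type*} (A : ι → Ω → ℝ) (B : κ → Ω → ℝ)
    (hA : ∀ i, AEStronglyMeasurable[mA] (A i) μ ∧ MemLp (A i) 2 μ)
    (hB : ∀ j, AEStronglyMeasurable[mB] (B j) μ ∧ MemLp (B j) 2 μ)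
    (hAstar : ∃ i, A i =ᵐ[μ] μ[T|mA]) (hBstar : ∃ j, B j =ᵐ[μ] μ[T|mB]) :
    (⨅ i, ⨆ j, (∫ ω, (A i ω - T ω) ^ 2 ∂μ - ∫ ω, (B j ω - T ω) ^ 2 ∂μ)) = 0
      ↔ μ[T|mA] =ᵐ[μ] μ[T|mB] := by
  set f := μ[T|mA] with hfdef
  set F := μ[T|mB] with hFdef
  have hf2 : MemLp f 2 μ := memL2_condexp hmA hT
  have hF2 : MemLp F 2 μ := memL2_condexp hmB hT
  have hAle : ∀ i, ∫ ω, (f ω - T ω) ^ 2 ∂μ ≤ ∫ ω, (A i ω - T ω) ^ 2 ∂μ := fun i =>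
    pythag_le hmA hT (hA i).1 (hA i).2
  have hBle : ∀ j, ∫ ω, (F ω - T ω) ^ 2 ∂μ ≤ ∫ ω, (B j ω - T ω) ^ 2 ∂μ := fun j =>
    pythag_le hmB hT (hB j).1 (hB j).2
  obtain ⟨i0, hi0⟩ := hAstar
  obtain ⟨j0, hj0⟩ := hBstar
  haveI : Nonempty ι := ⟨i0⟩
  haveI : Nonempty κ := ⟨j0⟩
  set cA := ∫ ω, (f ω - T ω) ^ 2 ∂μ with hcA
  set cB := ∫ ω, (F ω - T ω) ^ 2 ∂μ with hcB
  have hAi0 : ∫ ω, (A i0 ω - T ω) ^ 2 ∂μ = cA :=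
    integral_congr_ae (hi0.mono fun ω e => by simp only []; rw [e])
  have hBj0 : ∫ ω, (B j0 ω - T ω) ^ 2 ∂μ = cB :=
    integral_congr_ae (hj0.mono fun ω e => by simp only []; rw [e])
  have hsup : ∀ i,
      (⨆ j, (∫ ω, (A i ω - T ω) ^ 2 ∂μ - ∫ ω, (B j ω - T ω) ^ 2 ∂μ))
        = ∫ ω, (A i ω - T ω) ^ 2 ∂μ - cB := by
    intro i
    apply le_antisymm
    · exact ciSup_le fun j => sub_le_sub_left (hBle j) _
    · have hb : BddAbove (Set.range fun j =>
          (∫ ω, (A i ω - T ω) ^ 2 ∂μ - ∫ ω, (B j ω - T ω) ^ 2 ∂μ)) := by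
        refine ⟨∫ ω, (A i ω - T ω) ^ 2 ∂μ - cB, ?_⟩
        rintro x ⟨j, rfl⟩
        exact sub_le_sub_left (hBle j) _
      have := le_ciSup hb j0
      rwa [hBj0] at this
  have hLHS : (⨅ i, ⨆ j,
      (∫ ω, (A i ω - T ω) ^ 2 ∂μ - ∫ ω, (B j ω - T ω) ^ 2 ∂μ)) = cA - cB := by
    rw [iInf_congr hsup]
    apply le_antisymm
    · have hb : BddBelow (Set.range fun i =>
          ∫ ω, (A i ω - T ω) ^ 2 ∂μ - cB) := by
        refine ⟨cA - cB, ?_⟩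
        rintro x ⟨i, rfl⟩
        exact sub_le_sub_right (hAle i) _
      have := ciInf_le hb i0
      rwa [hAi0] at this
    · exact le_ciInf fun i => sub_le_sub_right (hAle i) _
  rw [hLHS]
  have hfmB : AEStronglyMeasurable[mB] f μ :=
    (stronglyMeasurable_condExp.mono hAB).aestronglyMeasurable
  have hpy : cA = ∫ ω, (f ω - F ω) ^ 2 ∂μ + cB := pythag hmB hT hfmB hf2
  have h0' : cA - cB = ∫ ω, (f ω - F ω) ^ 2 ∂μ := by linarith
  rw [h0', integral_eq_zero_iff_of_nonneg (fun ω => sq_nonneg _)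
      (by simpa using (hf2.sub hF2).integrable_sq)]
  constructor
  · intro h
    filter_upwards [h] with ω e
    have h1 : f ω - F ω = 0 := by simpa [pow_eq_zero_iff] using e
    linarith
  · intro h
    filter_upwards [h] with ω e
    simp [e]

/-- Theorem 1 of the paper (CIL constraint characterization): for a featurizer `Φ`, a finite
label set, and classes `H`, `G` of measurable square-integrable regressors containing the
Bayes-optimal regressors `h*(z) = E[T|Φ(X)=z]` and `g*(z,y) = E[T|Φ(X)=z, Y=y]`, the min-max
penalty `min_h max_g E[(h(Φ(X))-T)^2 - (g(Φ(X),Y)-T)^2]` is zero if and only if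
`E[T|Φ(X)] = E[T|Φ(X), Y = y]` almost surely for every label `y`. -/
theorem cil_constraint_iff_matching_conditional_means
    {Ω β γ δ : Type*} [MeasurableSpace Ω] [MeasurableSpace β] [MeasurableSpace γ]
    [MeasurableSpace δ] [MeasurableSingletonClass δ] [Fintype δ]
    (μ : Measure Ω) [IsProbabilityMeasure μ]
    (X : Ω → β) (hX : Measurable X) (Φ : β → γ) (hΦ : Measurable Φ)
    (Y : Ω → δ) (hY : Measurable Y)
    (T : Ω → ℝ) (hT : MemLp T 2 μ)
    (H : Set (γ → ℝ)) (G : Set (γ × δ → ℝ))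
    (hHmeas : ∀ h ∈ H, Measurable h ∧ MemLp (fun ω => h (Φ (X ω))) 2 μ)
    (hGmeas : ∀ g ∈ G, Measurable g ∧ MemLp (fun ω => g (Φ (X ω), Y ω)) 2 μ)
    (hHstar : ∃ h ∈ H, (fun ω => h (Φ (X ω)))
      =ᵐ[μ] μ[T | MeasurableSpace.comap (fun ω => Φ (X ω)) inferInstance])
    (hGstar : ∃ g ∈ G, (fun ω => g (Φ (X ω), Y ω))
      =ᵐ[μ] μ[T | MeasurableSpace.comap (fun ω => (Φ (X ω), Y ω)) inferInstance]) :
    (⨅ h : H, ⨆ g : G,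
        (∫ ω, ((h : γ → ℝ) (Φ (X ω)) - T ω) ^ 2 ∂μ
          - ∫ ω, ((g : γ × δ → ℝ) (Φ (X ω), Y ω) - T ω) ^ 2 ∂μ)) = 0
      ↔ ∀ y : δ, ∀ᵐ ω ∂μ, Y ω = y →
          (μ[T | MeasurableSpace.comap (fun ω => Φ (X ω)) inferInstance]) ω
            = (μ[T | MeasurableSpace.comap (fun ω => (Φ (X ω), Y ω)) inferInstance]) ω := by
  have hΦX : Measurable fun ω => Φ (X ω) := hΦ.comp hX
  have hpair : Measurable fun ω => (Φ (X ω), Y ω) := hΦX.prodMk hY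
  have hmA := hΦX.comap_le
  have hmB := hpair.comap_le
  have hAB : MeasurableSpace.comap (fun ω => Φ (X ω)) inferInstance
      ≤ MeasurableSpace.comap (fun ω => (Φ (X ω), Y ω)) inferInstance := by
    rintro s ⟨t, ht, rfl⟩
    exact ⟨t ×ˢ Set.univ, ht.prod MeasurableSet.univ, by ext ω; simp⟩
  have hΦXm : Measurable[MeasurableSpace.comap (fun ω => Φ (X ω)) inferInstance]
      fun ω => Φ (X ω) := Measurable.of_comap_le le_rfl
  have hpairm : Measurable[MeasurableSpace.comap (fun ω => (Φ (X ω), Y ω)) inferInstance]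
      fun ω => (Φ (X ω), Y ω) := Measurable.of_comap_le le_rfl
  obtain ⟨h0, hh0G, hh0⟩ := hHstar
  obtain ⟨g0, hg0G, hg0⟩ := hGstar
  have key := minmax_eq_zero_iff hmA hmB hAB hT
    (fun h : ↥H => fun ω => (h : γ → ℝ) (Φ (X ω)))
    (fun g : ↥G => fun ω => (g : γ × δ → ℝ) (Φ (X ω), Y ω))
    (fun h => ⟨((hHmeas h h.2).1.comp hΦXm).stronglyMeasurable.aestronglyMeasurable,
      (hHmeas h h.2).2⟩)
    (fun g => ⟨((hGmeas g g.2).1.comp hpairm).stronglyMeasurable.aestronglyMeasurable,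
      (hGmeas g g.2).2⟩)
    ⟨⟨h0, hh0G⟩, hh0⟩ ⟨⟨g0, hg0G⟩, hg0⟩
  refine key.trans ?_
  constructor
  · intro hfF y
    filter_upwards [hfF] with ω e _ using e
  · intro hy
    have := ae_all_iff.mpr hy
    filter_upwards [this] with ω hω using hω (Y ω) rfl
end
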